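/- Let n > 0 and b ≥ 0. There is no twice differentiable function Y : (b, ∞) → ℝ with Y(y) > 0 for all y > b satisfying Y''(y) = −(1/(n+3))·y·Y(y)^{1/(n+1)} on (b, ∞); likewise there is no such solution with Y(y) < 0 for all y > b. Consequently, every twice differentiable function Y : (b, ∞) → ℝ satisfying Y''(y) = −(1/(n+3))·y·N_n(Y(y)) on (b, ∞) has an unbounded set of zeros, i.e. all solutions are oscillatory as y → +∞. -/

import Mathlib

lemma lin_decay (f : ℝ → ℝ) (a K : ℝ)
    (hf : ∀ y, a ≤ y → DifferentiableAt ℝ f y)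
    (hd : ∀ y, a ≤ y → deriv f y ≤ -K) :
    ∀ y, a ≤ y → f y ≤ f a - K * (y - a) := by
  intro y hy
  have hanti : AntitoneOn (fun t => f t + K * t) (Set.Ici a) := by
    apply antitoneOn_of_deriv_nonpos (convex_Ici a)
    · exact fun t ht => ((hf t ht).add (differentiableAt_fun_id.const_mul K)).continuousAt.continuousWithinAt
    · rw [interior_Ici]
      exact fun t ht => ((hf t (le_of_lt ht)).add (differentiableAt_fun_id.const_mul K)).differentiableWithinAt
    · rw [interior_Ici]
      intro t ht
      have h1 : HasDerivAt (fun s => f s + K * s) (deriv f t + K * 1) t :=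
        (hf t ht.le).hasDerivAt.add ((hasDerivAt_id t).const_mul K)
      rw [h1.deriv]
      have := hd t ht.le
      linarith
  have := hanti (Set.self_mem_Ici) (Set.mem_Ici.mpr hy) hy
  simp only at this
  linarith

/-- Core lemma: no everywhere-positive solution of `Y'' = -(1/(n+3)) y Y^{1/(n+1)}` on `(a,∞)`. -/
lemma no_pos_sol (n a : ℝ) (hn : 0 < n) (ha : 0 ≤ a) (Y : ℝ → ℝ)
    (hd : ∀ y, a < y → DifferentiableAt ℝ Y y ∧ DifferentiableAt ℝ (deriv Y) y)
    (hpos : ∀ y, a < y → 0 < Y y)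
    (heq : ∀ y, a < y → deriv (deriv Y) y = -(1/(n+3)) * y * Y y ^ (1/(n+1)) ) : False := by
  have hc : (0:ℝ) < 1/(n+3) := by positivity
  have hY'' : ∀ y, a < y → deriv (deriv Y) y < 0 := by
    intro y hy
    rw [heq y hy]
    have hy0 : 0 < y := lt_of_le_of_lt ha hy
    have hr := Real.rpow_pos_of_pos (hpos y hy) (1/(n+1))
    have := mul_pos (mul_pos hc hy0) hr
    linarith
  have hanti : StrictAntiOn (deriv Y) (Set.Ioi a) := by
    apply strictAntiOn_of_deriv_neg (convex_Ioi a)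
    · exact fun t ht => ((hd t ht).2).continuousAt.continuousWithinAt
    · rw [interior_Ioi]; exact hY''
  -- deriv Y > 0 on (a, ∞)
  have hY' : ∀ y, a < y → 0 < deriv Y y := by
    by_contra h
    push_neg at h
    obtain ⟨y0, hy0, hle⟩ := h
    have hy1 : a < y0 + 1 := by linarith
    have hm : deriv Y (y0 + 1) < 0 :=
      lt_of_lt_of_le (hanti (Set.mem_Ioi.mpr hy0) (Set.mem_Ioi.mpr hy1) (by linarith)) hle
    set m := deriv Y (y0 + 1) with hmdef
    have hdec : ∀ y, y0 + 1 ≤ y → deriv Y y ≤ -(-m) := by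
      intro y hy
      rcases eq_or_lt_of_le hy with h | h
      · rw [← h]; simp [hmdef]
      · have := hanti (Set.mem_Ioi.mpr hy1) (Set.mem_Ioi.mpr (by linarith)) h
        linarith
    have hld := lin_decay Y (y0 + 1) (-m)
      (fun y hy => (hd y (by linarith)).1) hdec
    set y2 := (y0 + 1) + (Y (y0 + 1)) / (-m) + 1 with hy2def
    have hdivpos : 0 < Y (y0 + 1) / (-m) := div_pos (hpos _ hy1) (by linarith)
    have h2 := hld y2 (by simp only [hy2def]; linarith)
    have hmne : -m ≠ 0 := by linarith
    have hmm : (-m) * (Y (y0 + 1) / (-m)) = Y (y0 + 1) := by rw [mul_comm]; exact div_mul_cancel₀ _ hmne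
    have hkey : (-m) * (y2 - (y0 + 1)) = Y (y0 + 1) + (-m) := by
      rw [hy2def]; linear_combination hmm
    have hp := hpos y2 (by simp only [hy2def]; linarith)
    linarith
  -- Y strictly monotone
  have hmono : StrictMonoOn Y (Set.Ioi a) := by
    apply strictMonoOn_of_deriv_pos (convex_Ioi a)
    · exact fun t ht => ((hd t ht).1).continuousAt.continuousWithinAt
    · rw [interior_Ioi]; exact hY'
  have hy1 : a < a + 1 := by linarith
  have hA : 0 < Y (a + 1) := hpos _ hy1
  set B := Y (a + 1) ^ (1/(n+1)) with hBdef
  have hB : 0 < B := Real.rpow_pos_of_pos hA _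
  have hy1pos : (0:ℝ) < a + 1 := by linarith
  set K := (1/(n+3)) * B * (a + 1) with hKdef
  have hK : 0 < K := by positivity
  have hbound : ∀ y, a + 1 ≤ y → deriv (deriv Y) y ≤ -K := by
    intro y hy
    have hya : a < y := lt_of_lt_of_le hy1 hy
    rw [heq y hya]
    have hYy : Y (a + 1) ≤ Y y := by
      rcases eq_or_lt_of_le hy with h | h
      · rw [← h]
      · exact (hmono (Set.mem_Ioi.mpr hy1) (Set.mem_Ioi.mpr hya) h).le
    have hrp : B ≤ Y y ^ (1/(n+1)) := Real.rpow_le_rpow hA.le hYy (by positivity)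
    have hy0 : 0 < y := lt_of_le_of_lt ha hya
    have h1 : (1/(n+3)) * (a+1) * B ≤ (1/(n+3)) * y * (Y y ^ (1/(n+1))) := by
      apply mul_le_mul _ hrp hB.le (by positivity)
      nlinarith
    simp only [hKdef]
    nlinarith
  have hld := lin_decay (deriv Y) (a + 1) K
    (fun y hy => (hd y (lt_of_lt_of_le hy1 hy)).2) hbound
  set D := deriv Y (a + 1) with hDdef
  have hD : 0 < D := hY' _ hy1
  have hdivpos : 0 < D / K := div_pos hD hK
  set y2 := (a + 1) + D / K + 1 with hy2def
  have h2 := hld y2 (by simp only [hy2def]; linarith)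
  have hmm : K * (D / K) = D := by rw [mul_comm]; exact div_mul_cancel₀ _ hK.ne'
  have hkey : K * (y2 - (a + 1)) = D + K := by
    rw [hy2def]; linear_combination hmm
  have hp := hY' y2 (by simp only [hy2def]; linarith)
  linarith


/-- The odd power nonlinearity `N_n(Y) = |Y|^{-n/(n+1)}·Y` (with `N_n(0) = 0`). -/
noncomputable def Nn (n Y : ℝ) : ℝ := |Y| ^ (-(n / (n + 1))) * Y

lemma Nn_of_pos (n Z : ℝ) (hn : 0 < n) (hZ : 0 < Z) : Nn n Z = Z ^ (1/(n+1)) := by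
  unfold Nn
  rw [abs_of_pos hZ]
  rw [← Real.rpow_add_one hZ.ne']
  congr 1
  have h1 : n + 1 ≠ 0 := by linarith
  field_simp
  ring

lemma Nn_neg (n Z : ℝ) : Nn n (-Z) = -Nn n Z := by
  unfold Nn
  rw [abs_neg]
  ring

lemma no_neg_sol (n a : ℝ) (hn : 0 < n) (ha : 0 ≤ a) (Y : ℝ → ℝ)
    (hd : ∀ y, a < y → DifferentiableAt ℝ Y y ∧ DifferentiableAt ℝ (deriv Y) y)
    (hneg : ∀ y, a < y → Y y < 0)
    (heq : ∀ y, a < y → deriv (deriv Y) y = -(1/(n+3)) * y * Nn n (Y y)) : False := by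
  have hdz : deriv (fun t => -Y t) = fun t => -deriv Y t := funext fun t => deriv.neg
  apply no_pos_sol n a hn ha (fun t => -Y t)
  · intro y hy
    refine ⟨((hd y hy).1).neg, ?_⟩
    rw [hdz]
    exact ((hd y hy).2).neg
  · intro y hy
    simpa using hneg y hy
  · intro y hy
    rw [hdz]
    have h2 : deriv (fun t => -deriv Y t) y = -deriv (deriv Y) y := deriv.neg
    rw [h2, heq y hy]
    have hZ : 0 < -Y y := by linarith [hneg y hy]
    have h1 : Nn n (Y y) = -Nn n (-Y y) := by
      have := Nn_neg n (-Y y)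
      rw [neg_neg] at this
      linarith
    rw [h1, Nn_of_pos n (-Y y) hn hZ]
    ring


/-- Let `n > 0`, `b ≥ 0`. There is no twice differentiable
solution of `Y'' = -(1/(n+3))·y·Y^{1/(n+1)}` on `(b, ∞)` which is everywhere
positive there, nor one (for the odd-power form of the equation) which is
everywhere negative; consequently every twice differentiable solution of
`Y'' = -(1/(n+3))·y·N_n(Y)` on `(b, ∞)` has an unbounded set of zeros. -/
theorem stmt6 (n b : ℝ) (hn : 0 < n) (hb : 0 ≤ b) :
    (¬ ∃ Y : ℝ → ℝ,
      (∀ y : ℝ, b < y → DifferentiableAt ℝ Y y ∧ DifferentiableAt ℝ (deriv Y) y) ∧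
      (∀ y : ℝ, b < y → 0 < Y y) ∧
      (∀ y : ℝ, b < y →
        deriv (deriv Y) y = -(1 / (n + 3)) * y * Y y ^ (1 / (n + 1)))) ∧
    (¬ ∃ Y : ℝ → ℝ,
      (∀ y : ℝ, b < y → DifferentiableAt ℝ Y y ∧ DifferentiableAt ℝ (deriv Y) y) ∧
      (∀ y : ℝ, b < y → Y y < 0) ∧
      (∀ y : ℝ, b < y →
        deriv (deriv Y) y = -(1 / (n + 3)) * y * Nn n (Y y))) ∧
    (∀ Y : ℝ → ℝ,
      (∀ y : ℝ, b < y → DifferentiableAt ℝ Y y ∧ DifferentiableAt ℝ (deriv Y) y) →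
      (∀ y : ℝ, b < y →
        deriv (deriv Y) y = -(1 / (n + 3)) * y * Nn n (Y y)) →
      ∀ M : ℝ, ∃ y : ℝ, M < y ∧ b < y ∧ Y y = 0) := by
  refine ⟨?_, ?_, ?_⟩
  · rintro ⟨Y, hd, hp, he⟩
    exact no_pos_sol n b hn hb Y hd hp he
  · rintro ⟨Y, hd, hp, he⟩
    exact no_neg_sol n b hn hb Y hd hp he
  · intro Y hd he M
    by_contra h
    push_neg at h
    set a := max M b with hadef
    have hab : b ≤ a := le_max_right _ _
    have ha0 : 0 ≤ a := le_trans hb hab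
    have hne : ∀ y, a < y → Y y ≠ 0 := fun y hy =>
      h y (lt_of_le_of_lt (le_max_left _ _) hy) (lt_of_le_of_lt hab hy)
    have hd' : ∀ y, a < y → DifferentiableAt ℝ Y y ∧ DifferentiableAt ℝ (deriv Y) y :=
      fun y hy => hd y (lt_of_le_of_lt hab hy)
    have he' : ∀ y, a < y → deriv (deriv Y) y = -(1 / (n + 3)) * y * Nn n (Y y) :=
      fun y hy => he y (lt_of_le_of_lt hab hy)
    have hcont : ContinuousOn Y (Set.Ioi a) :=
      fun y hy => ((hd' y hy).1).continuousAt.continuousWithinAt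
    have ivt : ∀ u v : ℝ, a < u → a < v → Y u < 0 → 0 < Y v → False := by
      intro u v hu hv hYu hYv
      rcases le_total u v with huv | huv
      · have hsub : Set.Icc u v ⊆ Set.Ioi a := fun t ht => lt_of_lt_of_le hu ht.1
        obtain ⟨t, ht, hts⟩ := intermediate_value_Icc huv (hcont.mono hsub) ⟨hYu.le, hYv.le⟩
        exact hne t (hsub ht) hts
      · have hsub : Set.Icc v u ⊆ Set.Ioi a := fun t ht => lt_of_lt_of_le hv ht.1
        obtain ⟨t, ht, hts⟩ := intermediate_value_Icc' huv (hcont.mono hsub) ⟨hYu.le, hYv.le⟩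
        exact hne t (hsub ht) hts
    have ha1 : a < a + 1 := by linarith
    have hsign : (∀ y, a < y → 0 < Y y) ∨ (∀ y, a < y → Y y < 0) := by
      rcases lt_trichotomy (Y (a+1)) 0 with h0 | h0 | h0
      · right
        intro y hy
        by_contra hge
        push_neg at hge
        exact ivt (a+1) y ha1 hy h0 (lt_of_le_of_ne hge (Ne.symm (hne y hy)))
      · exact absurd h0 (hne (a+1) ha1)
      · left
        intro y hy
        by_contra hge
        push_neg at hge
        exact ivt y (a+1) hy ha1 (lt_of_le_of_ne hge (hne y hy)) h0
    rcases hsign with hs | hs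
    · apply no_pos_sol n a hn ha0 Y hd' hs
      intro y hy
      rw [he' y hy, Nn_of_pos n (Y y) hn (hs y hy)]
    · exact no_neg_sol n a hn ha0 Y hd' hs he'
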